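/- Let pi be a permutation in S_d with exactly n inversions, where n < binomial(d,2). Then the partial permutohedron vector F_pi = sum over pi-admissible sigma in S_d of sign(sigma) * e_{a(pi) + id - sigma} is an eigenvector of the adjacency matrix of SR(d,n) with eigenvalue -n. -/

import Mathlib

open Finset

abbrev SRVert (d n : ℕ) : Type := {x : Fin d → ℕ // ∑ i, x i = n}

noncomputable instance SRVert.fintype (d n : ℕ) : Fintype (SRVert d n) :=
  Fintype.ofInjective
    (fun x : SRVert d n => fun i => (⟨x.1 i, by
      have h := Finset.single_le_sum (f := x.1)
        (fun j _ => Nat.zero_le (x.1 j)) (Finset.mem_univ i)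
      have h2 := x.2
      omega⟩ : Fin (n+1)))
    (fun x y h => Subtype.ext (funext fun i => congrArg Fin.val (congrFun h i)))

/-- The simplicial rook graph: two vertices are adjacent if they differ in
exactly two coordinates. -/
def SR (d n : ℕ) : SimpleGraph (SRVert d n) where
  Adj x y := (Finset.univ.filter fun i => x.1 i ≠ y.1 i).card = 2
  symm := by
    refine ⟨fun x y h => ?_⟩
    rw [show (Finset.univ.filter fun i => y.1 i ≠ x.1 i)
        = (Finset.univ.filter fun i => x.1 i ≠ y.1 i) by
      apply Finset.filter_congr; intro i _; simp [ne_comm]]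
    exact h
  loopless := by refine ⟨fun z h => ?_⟩; simp at h

instance (d n : ℕ) : DecidableRel (SR d n).Adj :=
  fun x y => inferInstanceAs (Decidable (_ = 2))


/-- The inversion word of a permutation: `a_i` is the number of `j > i`
with `π i > π j`. -/
def invWord (d : ℕ) (π : Equiv.Perm (Fin d)) : Fin d → ℕ :=
  fun i => (Finset.univ.filter fun j => i < j ∧ π j < π i).card

/-- The partial permutohedron vector `F_π = ∑ sign(σ) e_{x(σ)}`, the sum being
over `π`-admissible permutations `σ`, where `x(σ)_i = a_i + i - σ i`
(so that `v = x(σ)` iff `v_i + σ i = a_i + i` for all `i`). -/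
def Fvec (d n : ℕ) (π : Equiv.Perm (Fin d)) : SRVert d n → ℝ :=
  fun v => ∑ σ : Equiv.Perm (Fin d),
    if (∀ i, v.1 i + (σ i : ℕ) = invWord d π i + (i : ℕ))
    then ((Equiv.Perm.sign σ : ℤ) : ℝ) else 0


namespace PPEAux

variable {d : ℕ} (b v : Fin d → ℕ)

def tzf (k : Fin d) : ℤ := (b k : ℤ) - (v k : ℤ)

abbrev DC (σ : Equiv.Perm (Fin d)) : Prop :=
  (∀ k, (σ k : ℕ) ≤ b k) ∧ (univ.filter fun k => v k + (σ k : ℕ) ≠ b k).card = 2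

def pP (σ : Equiv.Perm (Fin d)) (i j : Fin d) : Fin d :=
  if ((σ i : ℕ) : ℤ) < tzf b v i then i else j

def toFinD (z : ℤ) (fb : Fin d) : Fin d :=
  if h : z.toNat < d then ⟨z.toNat, h⟩ else fb

def qP (σ : Equiv.Perm (Fin d)) (i j : Fin d) : Fin d :=
  σ.symm (toFinD (tzf b v (pP b v σ i j)) i)

lemma pair_cases {α : Type*} [DecidableEq α] {a b c e : α} (hab : a ≠ b)
    (h : ({a, b} : Finset α) = {c, e}) : (a = c ∧ b = e) ∨ (a = e ∧ b = c) := by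
  have ha : a = c ∨ a = e := by
    have : a ∈ ({c, e} : Finset α) := by rw [← h]; simp
    simpa using this
  have hb : b = c ∨ b = e := by
    have : b ∈ ({c, e} : Finset α) := by rw [← h]; simp
    simpa using this
  rcases ha with h1 | h1 <;> rcases hb with h2 | h2
  · exact absurd (h1.trans h2.symm) hab
  · exact Or.inl ⟨h1, h2⟩
  · exact Or.inr ⟨h1, h2⟩
  · exact absurd (h1.trans h2.symm) hab

lemma inner_main (n : ℕ) (hb1 : ∀ k, b k < d)
    (hb2 : ∑ k, b k = n + ∑ k : Fin d, (k : ℕ)) (hv : ∑ k, v k = n)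
    (hnex : ¬ ∃ σ₀ : Equiv.Perm (Fin d), ∀ k, v k + (σ₀ k : ℕ) = b k)
    (σ : Equiv.Perm (Fin d)) (i j : Fin d) (hij : i ≠ j)
    (hle : ∀ k, (σ k : ℕ) ≤ b k)
    (hfil : univ.filter (fun k => v k + (σ k : ℕ) ≠ b k) = {i, j}) :
    ∃ p q o : Fin d,
      pP b v σ i j = p ∧ qP b v σ i j = q ∧ p ≠ q ∧ o ≠ q ∧ p ≠ o ∧
      DC b v (σ * Equiv.swap p q) ∧
      univ.filter (fun k => v k + ((σ * Equiv.swap p q) k : ℕ) ≠ b k) = {o, q} ∧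
      (∀ i' j' : Fin d, i' ≠ j' → ({i', j'} : Finset (Fin d)) = ({o, q} : Finset (Fin d)) →
        pP b v (σ * Equiv.swap p q) i' j' = q ∧ qP b v (σ * Equiv.swap p q) i' j' = p) := by
  have hEc : ∀ k, (v k + (σ k : ℕ) ≠ b k) ↔ (k = i ∨ k = j) := by
    intro k
    constructor
    · intro h
      have hk : k ∈ univ.filter (fun k => v k + (σ k : ℕ) ≠ b k) := by
        simp only [mem_filter, mem_univ, true_and]; exact h
      rw [hfil] at hk; simpa using hk
    · intro h
      have hk : k ∈ ({i, j} : Finset (Fin d)) := by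
        simp only [mem_insert, mem_singleton]; exact h
      rw [← hfil] at hk
      exact (Finset.mem_filter.mp hk).2
  have hσsum : ∑ k, ((σ k : ℕ) : ℤ) = ∑ k : Fin d, ((k : ℕ) : ℤ) :=
    Equiv.sum_comp σ (fun x : Fin d => ((x : ℕ) : ℤ))
  have htzsum : ∑ k, tzf b v k = ∑ k : Fin d, ((k : ℕ) : ℤ) := by
    have hb2' : (∑ k, (b k : ℤ)) = (n : ℤ) + ∑ k : Fin d, ((k : ℕ) : ℤ) := by
      have := congrArg (fun m : ℕ => (m : ℤ)) hb2
      push_cast at this ⊢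
      exact this
    have hv' : (∑ k, (v k : ℤ)) = (n : ℤ) := by
      have := congrArg (fun m : ℕ => (m : ℤ)) hv
      push_cast at this ⊢; exact this
    unfold tzf
    rw [Finset.sum_sub_distrib, hb2', hv']; ring
  have hpair : ((σ i : ℕ) : ℤ) + ((σ j : ℕ) : ℤ) = tzf b v i + tzf b v j := by
    have h0 : ∑ k, (((σ k : ℕ) : ℤ) - tzf b v k) = 0 := by
      rw [Finset.sum_sub_distrib, hσsum, htzsum]; ring
    have h1 : ∑ k ∈ ({i, j} : Finset (Fin d)), (((σ k : ℕ) : ℤ) - tzf b v k) = 0 := by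
      rw [← h0]
      apply Finset.sum_subset (Finset.subset_univ _)
      intro k _ hk
      simp only [mem_insert, mem_singleton] at hk
      push_neg at hk
      have h3 : v k + (σ k : ℕ) = b k := by
        by_contra hc
        rcases (hEc k).mp hc with h | h
        exacts [hk.1 h, hk.2 h]
      unfold tzf; omega
    rw [Finset.sum_pair hij] at h1
    linarith
  have hdi : ((σ i : ℕ) : ℤ) ≠ tzf b v i := by
    have h := (hEc i).mpr (Or.inl rfl); unfold tzf; omega
  have hdj : ((σ j : ℕ) : ℤ) ≠ tzf b v j := by
    have h := (hEc j).mpr (Or.inr rfl); unfold tzf; omega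
  have hone : (((σ i : ℕ) : ℤ) < tzf b v i ∧ tzf b v j < ((σ j : ℕ) : ℤ)) ∨
      (((σ j : ℕ) : ℤ) < tzf b v j ∧ tzf b v i < ((σ i : ℕ) : ℤ)) := by omega
  obtain ⟨p, o, hpo, hEc', hp, ho, hpair', hpP⟩ :
      ∃ p o : Fin d, p ≠ o ∧ (∀ k, (v k + (σ k : ℕ) ≠ b k) ↔ (k = p ∨ k = o)) ∧
        ((σ p : ℕ) : ℤ) < tzf b v p ∧ tzf b v o < ((σ o : ℕ) : ℤ) ∧
        ((σ p : ℕ) : ℤ) + ((σ o : ℕ) : ℤ) = tzf b v p + tzf b v o ∧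
        pP b v σ i j = p := by
    rcases hone with ⟨h1, h2⟩ | ⟨h1, h2⟩
    · exact ⟨i, j, hij, hEc, h1, h2, hpair, by unfold pP; rw [if_pos h1]⟩
    · refine ⟨j, i, hij.symm, ?_, h1, h2, by linarith, ?_⟩
      · intro k; rw [hEc k]; tauto
      · unfold pP
        rw [if_neg (by omega : ¬ (((σ i : ℕ) : ℤ) < tzf b v i))]
  clear hone hdi hdj hpair hEc hfil hij
  -- construct q
  have h0p : (0:ℤ) ≤ tzf b v p := by omega
  have hpd : tzf b v p < (d : ℤ) := by
    have h1 := hle p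
    have h2 : tzf b v p ≤ (b p : ℤ) := by unfold tzf; omega
    have h3 := hb1 p; omega
  have htoNd : (tzf b v p).toNat < d := by omega
  set w : Fin d := toFinD (tzf b v p) i with hw
  have hwval : ((w : ℕ) : ℤ) = tzf b v p := by
    rw [hw]; unfold toFinD
    rw [dif_pos htoNd]
    simp [Int.toNat_of_nonneg h0p]
  have htoF : ∀ fb : Fin d, toFinD (tzf b v p) fb = w := by
    intro fb; rw [hw]; unfold toFinD; rw [dif_pos htoNd, dif_pos htoNd]
  set q : Fin d := σ.symm w with hq
  have hσq : σ q = w := σ.apply_symm_apply w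
  have hσqv : ((σ q : ℕ) : ℤ) = tzf b v p := by rw [hσq]; exact hwval
  have hqp : q ≠ p := by
    intro h; rw [h] at hσqv; omega
  have hqo : q ≠ o := by
    intro h
    rw [h] at hσqv   -- σ o = tz p
    apply hnex
    refine ⟨σ * Equiv.swap p o, ?_⟩
    intro k
    by_cases hk1 : k = p
    · rw [hk1, Equiv.Perm.mul_apply, Equiv.swap_apply_left]
      unfold tzf at hσqv; omega
    · by_cases hk2 : k = o
      · rw [hk2, Equiv.Perm.mul_apply, Equiv.swap_apply_right]
        have h4 : ((σ p : ℕ) : ℤ) = tzf b v o := by omega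
        unfold tzf at h4; omega
      · rw [Equiv.Perm.mul_apply, Equiv.swap_apply_of_ne_of_ne hk1 hk2]
        by_contra hc
        rcases (hEc' k).mp hc with h | h; exacts [hk1 h, hk2 h]
  have hqoff : tzf b v q = tzf b v p := by
    have h1 : v q + (σ q : ℕ) = b q := by
      by_contra hc
      rcases (hEc' q).mp hc with h | h; exacts [hqp h, hqo h]
    unfold tzf at hσqv ⊢
    omega
  set σ' := σ * Equiv.swap p q with hσ'
  have hs'p : σ' p = σ q := by rw [hσ', Equiv.Perm.mul_apply, Equiv.swap_apply_left]
  have hs'q : σ' q = σ p := by rw [hσ', Equiv.Perm.mul_apply, Equiv.swap_apply_right]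
  have hs'k : ∀ k, k ≠ p → k ≠ q → σ' k = σ k := fun k h1 h2 => by
    rw [hσ', Equiv.Perm.mul_apply, Equiv.swap_apply_of_ne_of_ne h1 h2]
  have htzlep : tzf b v p ≤ (b p : ℤ) := by unfold tzf; omega
  have htzleq : tzf b v q ≤ (b q : ℤ) := by unfold tzf; omega
  have hle' : ∀ k, (σ' k : ℕ) ≤ b k := by
    intro k
    by_cases hk1 : k = p
    · subst hk1; rw [hs'p]; omega
    · by_cases hk2 : k = q
      · subst hk2; rw [hs'q]; omega
      · rw [hs'k k hk1 hk2]; exact hle k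
  have hfil' : univ.filter (fun k => v k + (σ' k : ℕ) ≠ b k) = {o, q} := by
    ext k
    simp only [mem_filter, mem_univ, true_and, mem_insert, mem_singleton]
    by_cases hk1 : k = p
    · rw [hk1]
      have hval : v p + (σ' p : ℕ) = b p := by
        rw [hs'p]; unfold tzf at hσqv; omega
      constructor
      · intro h; exact absurd hval h
      · rintro (h | h); exacts [absurd h hpo, absurd h (Ne.symm hqp)]
    · by_cases hk2 : k = q
      · rw [hk2]
        have hval : v q + (σ' q : ℕ) ≠ b q := by
          rw [hs'q]
          have h5 := hqoff
          have h6 := hp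
          have h7 : tzf b v q = (b q : ℤ) - (v q : ℤ) := rfl
          omega
        exact ⟨fun _ => Or.inr rfl, fun _ => hval⟩
      · rw [hs'k k hk1 hk2, hEc' k]
        constructor
        · rintro (h | h); exacts [absurd h hk1, Or.inl h]
        · rintro (h | h); exacts [Or.inr h, absurd h hk2]
  have hoq : o ≠ q := Ne.symm hqo
  have hlast : ∀ i' j' : Fin d, i' ≠ j' → ({i', j'} : Finset (Fin d)) = ({o, q} : Finset (Fin d)) →
      pP b v σ' i' j' = q ∧ qP b v σ' i' j' = p := by
    intro i' j' hij' hset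
    have hq1 : ((σ' q : ℕ) : ℤ) < tzf b v q := by rw [hs'q, hqoff]; exact hp
    have ho1 : ¬ (((σ' o : ℕ) : ℤ) < tzf b v o) := by
      rw [hs'k o (Ne.symm hpo) hoq]; omega
    have hσ'p : σ' p = w := by rw [hs'p, hσq]
    have hsymm : σ'.symm w = p := by rw [Equiv.symm_apply_eq]; exact hσ'p.symm
    rcases pair_cases hij' hset with ⟨h1, h2⟩ | ⟨h1, h2⟩
    · rw [h1, h2]
      have hpP' : pP b v σ' o q = q := by unfold pP; rw [if_neg ho1]
      refine ⟨hpP', ?_⟩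
      unfold qP
      rw [hpP', hqoff, htoF]
      exact hsymm
    · rw [h1, h2]
      have hpP' : pP b v σ' q o = q := by unfold pP; rw [if_pos hq1]
      refine ⟨hpP', ?_⟩
      unfold qP
      rw [hpP', hqoff, htoF]
      exact hsymm
  refine ⟨p, q, o, hpP, ?_, Ne.symm hqp, hoq, hpo, ⟨hle', by rw [hfil']; exact Finset.card_pair hoq⟩,
    hfil', hlast⟩
  unfold qP
  rw [hpP, htoF]

open Classical in
noncomputable def Phi (σ : Equiv.Perm (Fin d)) : Equiv.Perm (Fin d) :=
  if h : DC b v σ then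
    σ * Equiv.swap (pP b v σ (Finset.card_eq_two.mp h.2).choose
        (Finset.card_eq_two.mp h.2).choose_spec.choose)
      (qP b v σ (Finset.card_eq_two.mp h.2).choose
        (Finset.card_eq_two.mp h.2).choose_spec.choose)
  else σ

lemma phi_not (σ : Equiv.Perm (Fin d)) (h : ¬ DC b v σ) : Phi b v σ = σ := by
  unfold Phi; rw [dif_neg h]

lemma phi_spec (n : ℕ) (hb1 : ∀ k, b k < d)
    (hb2 : ∑ k, b k = n + ∑ k : Fin d, (k : ℕ)) (hv : ∑ k, v k = n)
    (hnex : ¬ ∃ σ₀ : Equiv.Perm (Fin d), ∀ k, v k + (σ₀ k : ℕ) = b k)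
    (σ : Equiv.Perm (Fin d)) (hD : DC b v σ) :
    DC b v (Phi b v σ) ∧ Phi b v (Phi b v σ) = σ ∧ Phi b v σ ≠ σ ∧
    Equiv.Perm.sign (Phi b v σ) = - Equiv.Perm.sign σ := by
  classical
  obtain ⟨ha12, hfil⟩ := (Finset.card_eq_two.mp hD.2).choose_spec.choose_spec
  have hPhi : Phi b v σ = σ * Equiv.swap
      (pP b v σ (Finset.card_eq_two.mp hD.2).choose
        (Finset.card_eq_two.mp hD.2).choose_spec.choose)
      (qP b v σ (Finset.card_eq_two.mp hD.2).choose
        (Finset.card_eq_two.mp hD.2).choose_spec.choose) := by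
    unfold Phi; rw [dif_pos hD]
  obtain ⟨p, q, o, hp1, hq1, hpq, hoq, hpo, hDC', hfil', hlast⟩ :=
    inner_main b v n hb1 hb2 hv hnex σ _ _ ha12 hD.1 hfil
  rw [hp1, hq1] at hPhi
  refine ⟨by rw [hPhi]; exact hDC', ?_, ?_, ?_⟩
  · -- involutive
    have hD' : DC b v (σ * Equiv.swap p q) := hDC'
    have hPhi2 : Phi b v (σ * Equiv.swap p q) = (σ * Equiv.swap p q) * Equiv.swap
        (pP b v (σ * Equiv.swap p q) (Finset.card_eq_two.mp hD'.2).choose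
          (Finset.card_eq_two.mp hD'.2).choose_spec.choose)
        (qP b v (σ * Equiv.swap p q) (Finset.card_eq_two.mp hD'.2).choose
          (Finset.card_eq_two.mp hD'.2).choose_spec.choose) := by
      unfold Phi; rw [dif_pos hD']
    obtain ⟨hb12, hfil2⟩ := (Finset.card_eq_two.mp hD'.2).choose_spec.choose_spec
    have hsets : ({(Finset.card_eq_two.mp hD'.2).choose,
        (Finset.card_eq_two.mp hD'.2).choose_spec.choose} : Finset (Fin d)) = {o, q} := by
      rw [← hfil2]; exact hfil'
    obtain ⟨hP2, hQ2⟩ := hlast _ _ hb12 hsets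
    rw [hPhi, hPhi2, hP2, hQ2, Equiv.swap_comm q p, mul_assoc, Equiv.swap_mul_self, mul_one]
  · -- not equal
    rw [hPhi]
    intro hcon
    have h1 : Equiv.swap p q = 1 := by
      have h2 : σ * Equiv.swap p q = σ * 1 := by rw [mul_one]; exact hcon
      exact mul_left_cancel h2
    have h2 : Equiv.swap p q p = (1 : Equiv.Perm (Fin d)) p := by rw [h1]
    simp only [Equiv.swap_apply_left, Equiv.Perm.one_apply] at h2
    exact hpq h2.symm
  · rw [hPhi]
    rw [Equiv.Perm.sign_mul, Equiv.Perm.sign_swap hpq, mul_neg_one]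

lemma case2_sum (n : ℕ) (hb1 : ∀ k, b k < d)
    (hb2 : ∑ k, b k = n + ∑ k : Fin d, (k : ℕ)) (hv : ∑ k, v k = n)
    (hnex : ¬ ∃ σ₀ : Equiv.Perm (Fin d), ∀ k, v k + (σ₀ k : ℕ) = b k) :
    ∑ σ : Equiv.Perm (Fin d),
      (if DC b v σ then ((Equiv.Perm.sign σ : ℤ) : ℝ) else 0) = 0 := by
  classical
  apply Finset.sum_involution (fun σ _ => Phi b v σ)
  · intro σ _
    by_cases h : DC b v σ
    · obtain ⟨hD', _, _, hsgn⟩ := phi_spec b v n hb1 hb2 hv hnex σ h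
      rw [if_pos h, if_pos hD', hsgn]
      push_cast
      ring
    · rw [phi_not b v σ h, if_neg h]; ring
  · intro σ _ hne
    by_cases h : DC b v σ
    · exact (phi_spec b v n hb1 hb2 hv hnex σ h).2.2.1
    · rw [if_neg h] at hne; exact absurd rfl hne
  · intro σ _; exact mem_univ _
  · intro σ _
    by_cases h : DC b v σ
    · exact (phi_spec b v n hb1 hb2 hv hnex σ h).2.1
    · rw [phi_not b v σ h, phi_not b v σ h]

lemma perm_pair_eq (σ τ : Equiv.Perm (Fin d)) (i j : Fin d) (hij : i ≠ j)
    (h : ∀ k, σ k ≠ τ k ↔ (k = i ∨ k = j)) :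
    σ = τ * Equiv.swap i j ∧ σ i = τ j ∧ σ j = τ i := by
  have hoff : ∀ k, k ≠ i → k ≠ j → σ k = τ k := by
    intro k h1 h2; by_contra hc
    rcases (h k).mp hc with h3 | h3; exacts [h1 h3, h2 h3]
  have hσi : σ i = τ j := by
    have h1 : σ i ≠ τ i := (h i).mpr (Or.inl rfl)
    have hτm : τ (τ.symm (σ i)) = σ i := τ.apply_symm_apply _
    have hmi : τ.symm (σ i) ≠ i := by
      intro e; rw [e] at hτm; exact h1 hτm.symm
    by_cases hmj : τ.symm (σ i) = j
    · rw [← hmj]; exact hτm.symm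
    · exfalso
      have h2 : σ (τ.symm (σ i)) = τ (τ.symm (σ i)) := hoff _ hmi hmj
      have h3 : σ (τ.symm (σ i)) = σ i := h2.trans hτm
      exact hmi (σ.injective h3)
  have hσj : σ j = τ i := by
    have h1 : σ j ≠ τ j := (h j).mpr (Or.inr rfl)
    have hτm : τ (τ.symm (σ j)) = σ j := τ.apply_symm_apply _
    have hmj : τ.symm (σ j) ≠ j := by
      intro e; rw [e] at hτm; exact h1 hτm.symm
    by_cases hmi : τ.symm (σ j) = i
    · rw [← hmi]; exact hτm.symm
    · exfalso
      have h2 : σ (τ.symm (σ j)) = τ (τ.symm (σ j)) := hoff _ hmi hmj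
      have h3 : σ (τ.symm (σ j)) = σ j := h2.trans hτm
      exact hmj (σ.injective h3)
  refine ⟨?_, hσi, hσj⟩
  apply Equiv.ext
  intro k
  by_cases h1 : k = i
  · rw [h1, Equiv.Perm.mul_apply, Equiv.swap_apply_left]; exact hσi
  by_cases h2 : k = j
  · rw [h2, Equiv.Perm.mul_apply, Equiv.swap_apply_right]; exact hσj
  · rw [Equiv.Perm.mul_apply, Equiv.swap_apply_of_ne_of_ne h1 h2]; exact hoff k h1 h2

lemma count_gt (m : ℕ) : (univ.filter fun y : Fin d => m < (y : ℕ)).card = d - (m+1) := by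
  rw [Finset.card_filter]
  rw [Fin.sum_univ_eq_sum_range (fun x => if m < x then 1 else 0) d]
  rw [← Finset.card_filter]
  have h : (Finset.range d).filter (fun x => m < x) = Finset.Ico (m+1) d := by
    ext x; simp only [mem_filter, mem_range, mem_Ico]; omega
  rw [h, Nat.card_Ico]

lemma count_perm_gt (σ₀ : Equiv.Perm (Fin d)) (m : ℕ) :
    (univ.filter fun i : Fin d => m < (σ₀ i : ℕ)).card = d - (m+1) := by
  rw [Finset.card_filter, ← count_gt (d := d) m, Finset.card_filter]
  exact Equiv.sum_comp σ₀ (fun y : Fin d => if m < (y : ℕ) then 1 else 0)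

lemma count_lt_pairs : (univ.filter fun pr : Fin d × Fin d => pr.1 < pr.2).card
    = ∑ k : Fin d, (k : ℕ) := by
  rw [Finset.card_filter]
  rw [show (univ : Finset (Fin d × Fin d)) = univ ×ˢ univ from (Finset.univ_product_univ).symm]
  rw [Finset.sum_product]
  have hinner : ∀ i : Fin d, (∑ j : Fin d, if i < j then 1 else 0) = d - ((i : ℕ)+1) := by
    intro i
    have e1 : (∑ j : Fin d, if i < j then 1 else 0)
        = (∑ j : Fin d, if (i : ℕ) < (j : ℕ) then 1 else 0) := by
      apply Finset.sum_congr rfl; intro j _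
      congr 1
    rw [e1, ← Finset.card_filter]
    exact count_gt (i : ℕ)
  rw [Finset.sum_congr rfl (fun i _ => hinner i)]
  rw [Fin.sum_univ_eq_sum_range (fun m => d - (m+1)) d]
  rw [Fin.sum_univ_eq_sum_range (fun m => m) d]
  rw [← Finset.sum_range_reflect (fun m => m) d]
  apply Finset.sum_congr rfl; intro m hm
  simp only [mem_range] at hm
  omega

lemma count_Sg (n : ℕ) (σ₀ : Equiv.Perm (Fin d)) (hσ₀ : ∀ k, v k + (σ₀ k : ℕ) = b k)
    (hb1 : ∀ k, b k < d) (hb2 : ∑ k, b k = n + ∑ k : Fin d, (k : ℕ)) :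
    (univ.filter fun pr : Fin d × Fin d =>
      pr.1 < pr.2 ∧ ((σ₀ pr.1 : ℕ) ≤ b pr.2 ∧ (σ₀ pr.2 : ℕ) ≤ b pr.1)).card = n := by
  classical
  have hσle : ∀ k, (σ₀ k : ℕ) ≤ b k := fun k => by have := hσ₀ k; omega
  have hsplit := Finset.card_filter_add_card_filter_not
    (s := univ.filter fun pr : Fin d × Fin d => pr.1 < pr.2)
    (p := fun pr : Fin d × Fin d => (σ₀ pr.1 : ℕ) ≤ b pr.2 ∧ (σ₀ pr.2 : ℕ) ≤ b pr.1)
  rw [Finset.filter_filter, Finset.filter_filter] at hsplit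
  have hbadT : (univ.filter fun pr : Fin d × Fin d =>
      pr.1 < pr.2 ∧ ¬((σ₀ pr.1 : ℕ) ≤ b pr.2 ∧ (σ₀ pr.2 : ℕ) ≤ b pr.1)).card
      = (univ.filter fun pr : Fin d × Fin d => pr.1 ≠ pr.2 ∧ b pr.2 < (σ₀ pr.1 : ℕ)).card := by
    refine Finset.card_bij' (fun pr _ => if b pr.2 < (σ₀ pr.1 : ℕ) then pr else pr.swap)
      (fun pr _ => if pr.1 < pr.2 then pr else pr.swap) ?hi ?hj ?hli ?hri
    case hi =>
      intro pr hm
      simp only [mem_filter, mem_univ, true_and] at hm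
      obtain ⟨hxy, hbad⟩ := hm
      by_cases hc : b pr.2 < (σ₀ pr.1 : ℕ)
      · rw [if_pos hc]
        simp only [mem_filter, mem_univ, true_and]
        exact ⟨ne_of_lt hxy, hc⟩
      · rw [if_neg hc]
        simp only [mem_filter, mem_univ, true_and, Prod.fst_swap, Prod.snd_swap]
        refine ⟨(ne_of_lt hxy).symm, ?_⟩
        by_contra hB
        exact hbad ⟨not_lt.mp hc, not_lt.mp hB⟩
    case hj =>
      intro pr hm
      simp only [mem_filter, mem_univ, true_and] at hm
      obtain ⟨hne, hlt⟩ := hm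
      by_cases hc : pr.1 < pr.2
      · rw [if_pos hc]
        simp only [mem_filter, mem_univ, true_and]
        exact ⟨hc, fun hcontra => absurd hcontra.1 (not_le.mpr hlt)⟩
      · rw [if_neg hc]
        simp only [mem_filter, mem_univ, true_and, Prod.fst_swap, Prod.snd_swap]
        have hyx : pr.2 < pr.1 := lt_of_le_of_ne (not_lt.mp hc) (Ne.symm hne)
        exact ⟨hyx, fun hcontra => absurd hcontra.2 (not_le.mpr hlt)⟩
    case hli =>
      intro pr hm
      simp only [mem_filter, mem_univ, true_and] at hm
      obtain ⟨hxy, _⟩ := hm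
      by_cases hc : b pr.2 < (σ₀ pr.1 : ℕ)
      · rw [if_pos hc, if_pos hxy]
      · rw [if_neg hc]
        have hns : ¬ (pr.swap.1 < pr.swap.2) := by
          simp only [Prod.fst_swap, Prod.snd_swap]
          intro h; exact absurd (lt_trans h hxy) (lt_irrefl _)
        rw [if_neg hns, Prod.swap_swap]
    case hri =>
      intro pr hm
      simp only [mem_filter, mem_univ, true_and] at hm
      obtain ⟨hne, hlt⟩ := hm
      by_cases hc : pr.1 < pr.2
      · rw [if_pos hc, if_pos hlt]
      · rw [if_neg hc]
        have hns : ¬ (b pr.swap.2 < (σ₀ pr.swap.1 : ℕ)) := by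
          simp only [Prod.fst_swap, Prod.snd_swap]
          intro h
          have h1 := hσle pr.1
          have h2 := hσle pr.2
          omega
        rw [if_neg hns, Prod.swap_swap]
  have hT : (univ.filter fun pr : Fin d × Fin d => pr.1 ≠ pr.2 ∧ b pr.2 < (σ₀ pr.1 : ℕ)).card
      = ∑ k : Fin d, (d - (b k + 1)) := by
    rw [Finset.card_eq_sum_card_fiberwise (f := Prod.snd) (t := univ) (fun x _ => mem_univ _)]
    apply Finset.sum_congr rfl
    intro k _
    rw [← count_perm_gt (d := d) σ₀ (b k)]
    refine Finset.card_bij' (fun pr _ => pr.1) (fun x _ => (x, k)) ?hi ?hj ?hli ?hri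
    case hi =>
      intro pr hm
      simp only [mem_filter, mem_univ, true_and] at hm ⊢
      obtain ⟨⟨hne, hlt⟩, hsnd⟩ := hm
      rw [← hsnd]; exact hlt
    case hj =>
      intro x hm
      simp only [mem_filter, mem_univ, true_and] at hm
      have hxk : x ≠ k := by
        intro he; rw [he] at hm; exact absurd hm (not_lt.mpr (hσle k))
      exact mem_filter.mpr ⟨mem_filter.mpr ⟨mem_univ _, hxk, hm⟩, rfl⟩
    case hli =>
      intro pr hm
      simp only [mem_filter, mem_univ, true_and] at hm
      obtain ⟨_, hsnd⟩ := hm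
      exact Prod.ext rfl hsnd.symm
    case hri =>
      intro x hm; rfl
  have hsum1 : ∑ k : Fin d, (d - (b k + 1)) + ∑ k : Fin d, (b k + 1) = d * d := by
    rw [← Finset.sum_add_distrib]
    have he : ∀ k : Fin d, (d - (b k + 1)) + (b k + 1) = d := fun k => by
      have := hb1 k; omega
    rw [Finset.sum_congr rfl (fun k _ => he k), Finset.sum_const, Finset.card_univ,
      Fintype.card_fin, smul_eq_mul]
  have hsum2 : ∑ k : Fin d, (b k + 1) = (n + ∑ k : Fin d, (k : ℕ)) + d := by
    rw [Finset.sum_add_distrib, hb2, Finset.sum_const, Finset.card_univ, Fintype.card_fin,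
      smul_eq_mul, mul_one]
  have hgauss : (∑ k : Fin d, (k : ℕ)) * 2 = d * (d - 1) := by
    rw [Fin.sum_univ_eq_sum_range (fun m => m) d]
    exact Finset.sum_range_id_mul_two d
  have hlt := count_lt_pairs (d := d)
  have hdd : d * d = d * (d - 1) + d := by
    cases d with
    | zero => rfl
    | succ m => simp only [Nat.succ_sub_one]; ring
  obtain ⟨P, hP⟩ : ∃ P, d * d = P := ⟨_, rfl⟩
  obtain ⟨Q, hQ⟩ : ∃ Q, d * (d - 1) = Q := ⟨_, rfl⟩
  rw [hP, hQ] at hdd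
  rw [hP] at hsum1
  rw [hQ] at hgauss
  omega

lemma case1_sum (n : ℕ) (σ₀ : Equiv.Perm (Fin d)) (hσ₀ : ∀ k, v k + (σ₀ k : ℕ) = b k)
    (hb1 : ∀ k, b k < d) (hb2 : ∑ k, b k = n + ∑ k : Fin d, (k : ℕ)) :
    ∑ σ : Equiv.Perm (Fin d), (if DC b v σ then ((Equiv.Perm.sign σ : ℤ) : ℝ) else 0)
      = -(n : ℝ) * ((Equiv.Perm.sign σ₀ : ℤ) : ℝ) := by
  classical
  have hσle : ∀ k, (σ₀ k : ℕ) ≤ b k := fun k => by have := hσ₀ k; omega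
  rw [← Finset.sum_filter]
  have hbij : ∑ _pr ∈ (univ.filter fun pr : Fin d × Fin d =>
        pr.1 < pr.2 ∧ ((σ₀ pr.1 : ℕ) ≤ b pr.2 ∧ (σ₀ pr.2 : ℕ) ≤ b pr.1)),
        (-(((Equiv.Perm.sign σ₀ : ℤ) : ℝ)))
      = ∑ σ ∈ univ.filter (fun σ => DC b v σ), ((Equiv.Perm.sign σ : ℤ) : ℝ) := by
    apply Finset.sum_bij (i := fun pr _ => σ₀ * Equiv.swap pr.1 pr.2)
    · rintro ⟨x, y⟩ hm
      simp only [mem_filter, mem_univ, true_and] at hm ⊢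
      obtain ⟨hxy, hle1, hle2⟩ := hm
      have hne : x ≠ y := ne_of_lt hxy
      constructor
      · intro k
        by_cases h1 : k = x
        · rw [h1, Equiv.Perm.mul_apply, Equiv.swap_apply_left]; exact hle2
        by_cases h2 : k = y
        · rw [h2, Equiv.Perm.mul_apply, Equiv.swap_apply_right]; exact hle1
        · rw [Equiv.Perm.mul_apply, Equiv.swap_apply_of_ne_of_ne h1 h2]; exact hσle k
      · have hfil : univ.filter (fun k => v k + ((σ₀ * Equiv.swap x y) k : ℕ) ≠ b k)
            = {x, y} := by
          ext k
          simp only [mem_filter, mem_univ, true_and, mem_insert, mem_singleton]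
          by_cases h1 : k = x
          · rw [h1, Equiv.Perm.mul_apply, Equiv.swap_apply_left]
            have e1 := hσ₀ x
            have e2 : (σ₀ y : ℕ) ≠ (σ₀ x : ℕ) := by
              intro he; exact hne (σ₀.injective (Fin.val_inj.mp he)).symm
            constructor
            · intro _; exact Or.inl rfl
            · intro _; omega
          · by_cases h2 : k = y
            · rw [h2, Equiv.Perm.mul_apply, Equiv.swap_apply_right]
              have e1 := hσ₀ y
              have e2 : (σ₀ x : ℕ) ≠ (σ₀ y : ℕ) := by
                intro he; exact hne (σ₀.injective (Fin.val_inj.mp he))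
              constructor
              · intro _; exact Or.inr rfl
              · intro _; omega
            · rw [Equiv.Perm.mul_apply, Equiv.swap_apply_of_ne_of_ne h1 h2]
              constructor
              · intro hcon; exact absurd (hσ₀ k) hcon
              · rintro (h | h); exacts [absurd h h1, absurd h h2]
        rw [hfil]; exact Finset.card_pair hne
    · rintro ⟨x1, y1⟩ hm1 ⟨x2, y2⟩ hm2 heq
      simp only [mem_filter, mem_univ, true_and] at hm1 hm2
      have hswap : Equiv.swap x1 y1 = Equiv.swap x2 y2 := mul_left_cancel heq
      have hsupp := congrArg Equiv.Perm.support hswap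
      rw [Equiv.Perm.support_swap (ne_of_lt hm1.1),
        Equiv.Perm.support_swap (ne_of_lt hm2.1)] at hsupp
      rcases pair_cases (ne_of_lt hm1.1) hsupp with ⟨h1, h2⟩ | ⟨h1, h2⟩
      · rw [Prod.mk.injEq]; exact ⟨h1, h2⟩
      · exfalso
        have a1 : (x1 : ℕ) < (y1 : ℕ) := hm1.1
        have a2 : (x2 : ℕ) < (y2 : ℕ) := hm2.1
        have e1 : (x1 : ℕ) = (y2 : ℕ) := congrArg Fin.val h1
        have e2 : (y1 : ℕ) = (x2 : ℕ) := congrArg Fin.val h2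
        omega
    · intro σ hσ
      simp only [mem_filter, mem_univ, true_and] at hσ
      obtain ⟨hle, hcard⟩ := hσ
      obtain ⟨x, y, hxy, hfil⟩ := Finset.card_eq_two.mp hcard
      have hEc : ∀ k, (v k + (σ k : ℕ) ≠ b k) ↔ (k = x ∨ k = y) := by
        intro k
        constructor
        · intro h
          have hk : k ∈ univ.filter (fun k => v k + (σ k : ℕ) ≠ b k) := by
            simp only [mem_filter, mem_univ, true_and]; exact h
          rw [hfil] at hk; simpa using hk
        · intro h
          have hk : k ∈ ({x, y} : Finset (Fin d)) := by
            simp only [mem_insert, mem_singleton]; exact h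
          rw [← hfil] at hk
          exact (Finset.mem_filter.mp hk).2
      have hEc2 : ∀ k, σ k ≠ σ₀ k ↔ (k = x ∨ k = y) := by
        intro k
        rw [← hEc k]
        constructor
        · intro h1 hc
          exact h1 (Fin.val_inj.mp (by have := hσ₀ k; omega))
        · intro h1 hc
          apply h1
          rw [← hσ₀ k, hc]
      obtain ⟨hmul, hvx, hvy⟩ := perm_pair_eq σ σ₀ x y hxy hEc2
      rcases lt_or_gt_of_ne hxy with hlt | hlt
      · refine ⟨(x, y), ?_, hmul.symm⟩
        simp only [mem_filter, mem_univ, true_and]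
        refine ⟨hlt, ?_, ?_⟩
        · rw [← hvy]; exact hle y
        · rw [← hvx]; exact hle x
      · refine ⟨(y, x), ?_, ?_⟩
        · simp only [mem_filter, mem_univ, true_and]
          refine ⟨hlt, ?_, ?_⟩
          · rw [← hvx]; exact hle x
          · rw [← hvy]; exact hle y
        · show σ₀ * Equiv.swap y x = σ
          rw [Equiv.swap_comm y x]
          exact hmul.symm
    · rintro ⟨x, y⟩ hm
      simp only [mem_filter, mem_univ, true_and] at hm
      rw [Equiv.Perm.sign_mul, Equiv.Perm.sign_swap (ne_of_lt hm.1), mul_neg_one]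
      push_cast
      ring
  rw [← hbij, Finset.sum_const, count_Sg b v n σ₀ hσ₀ hb1 hb2, nsmul_eq_mul]
  ring

lemma rhs_one (σ₀ : Equiv.Perm (Fin d)) (hσ₀ : ∀ k, v k + (σ₀ k : ℕ) = b k) :
    ∑ σ : Equiv.Perm (Fin d),
      (if (∀ k, v k + (σ k : ℕ) = b k) then ((Equiv.Perm.sign σ : ℤ) : ℝ) else 0)
    = ((Equiv.Perm.sign σ₀ : ℤ) : ℝ) := by
  classical
  have huniq : ∀ σ : Equiv.Perm (Fin d), (∀ k, v k + (σ k : ℕ) = b k) ↔ σ = σ₀ := by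
    intro σ
    constructor
    · intro h
      apply Equiv.ext
      intro k
      have h1 := h k
      have h2 := hσ₀ k
      exact Fin.val_inj.mp (by omega)
    · rintro rfl; exact hσ₀
  calc ∑ σ : Equiv.Perm (Fin d),
        (if (∀ k, v k + (σ k : ℕ) = b k) then ((Equiv.Perm.sign σ : ℤ) : ℝ) else 0)
      = ∑ σ : Equiv.Perm (Fin d),
        (if σ = σ₀ then ((Equiv.Perm.sign σ : ℤ) : ℝ) else 0) := by
        apply Finset.sum_congr rfl
        intro σ _
        rw [if_congr (huniq σ) rfl rfl]
    _ = ((Equiv.Perm.sign σ₀ : ℤ) : ℝ) := by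
        rw [Finset.sum_ite_eq' univ σ₀ (fun σ => ((Equiv.Perm.sign σ : ℤ) : ℝ))]
        rw [if_pos (mem_univ _)]

lemma core (n : ℕ) (hb1 : ∀ k, b k < d)
    (hb2 : ∑ k, b k = n + ∑ k : Fin d, (k : ℕ)) (hv : ∑ k, v k = n) :
    ∑ σ : Equiv.Perm (Fin d), (if DC b v σ then ((Equiv.Perm.sign σ : ℤ) : ℝ) else 0)
    = -(n : ℝ) * ∑ σ : Equiv.Perm (Fin d),
        (if (∀ k, v k + (σ k : ℕ) = b k) then ((Equiv.Perm.sign σ : ℤ) : ℝ) else 0) := by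
  classical
  by_cases hex : ∃ σ₀ : Equiv.Perm (Fin d), ∀ k, v k + (σ₀ k : ℕ) = b k
  · obtain ⟨σ₀, hσ₀⟩ := hex
    rw [rhs_one b v σ₀ hσ₀, case1_sum b v n σ₀ hσ₀ hb1 hb2]
  · rw [case2_sum b v n hb1 hb2 hv hex]
    have hz : ∀ σ : Equiv.Perm (Fin d),
        (if (∀ k, v k + (σ k : ℕ) = b k) then ((Equiv.Perm.sign σ : ℤ) : ℝ) else 0) = 0 := by
      intro σ
      rw [if_neg]
      intro h
      exact hex ⟨σ, h⟩
    rw [Finset.sum_congr rfl (fun σ _ => hz σ)]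
    simp

end PPEAux


/-- for `π ∈ S_d` with exactly `n < binom(d,2)` inversions, the
partial permutohedron vector `F_π` is an eigenvector of the adjacency matrix of
`SR(d,n)` with eigenvalue `-n`. -/
theorem partial_permutohedron_eigenvector (d n : ℕ) (π : Equiv.Perm (Fin d))
    (hπ : ∑ i, invWord d π i = n) (hn : n < d.choose 2) :
    Fvec d n π ≠ 0 ∧
    ((SR d n).adjMatrix ℝ).mulVec (Fvec d n π) = (-(n : ℝ)) • Fvec d n π := by
  classical
  have hb1 : ∀ k : Fin d, invWord d π k + (k : ℕ) < d := by
    intro k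
    have h1 : invWord d π k ≤ (univ.filter fun j : Fin d => (k : ℕ) < (j : ℕ)).card := by
      apply Finset.card_le_card
      intro x hx
      simp only [mem_filter, mem_univ, true_and] at hx ⊢
      exact hx.1
    have h2 := PPEAux.count_gt (d := d) (k : ℕ)
    have h3 := k.isLt
    omega
  have hb2 : ∑ k : Fin d, (invWord d π k + (k : ℕ)) = n + ∑ k : Fin d, (k : ℕ) := by
    rw [Finset.sum_add_distrib, hπ]
  constructor
  · intro hzero
    have h0 := congrFun hzero ⟨fun k => invWord d π k, hπ⟩
    have h1 : Fvec d n π ⟨fun k => invWord d π k, hπ⟩ = 1 := by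
      have huniq : ∀ σ : Equiv.Perm (Fin d),
          (∀ i, invWord d π i + (σ i : ℕ) = invWord d π i + (i : ℕ)) ↔ σ = 1 := by
        intro σ
        constructor
        · intro h; apply Equiv.ext; intro k
          have h2 := h k
          have h3 : σ k = k := Fin.val_inj.mp (by omega)
          simpa using h3
        · rintro rfl i; simp
      show (∑ σ : Equiv.Perm (Fin d),
        if (∀ i, invWord d π i + (σ i : ℕ) = invWord d π i + (i : ℕ))
        then ((Equiv.Perm.sign σ : ℤ) : ℝ) else 0) = 1
      rw [Finset.sum_congr rfl (fun σ _ => if_congr (huniq σ) rfl rfl)]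
      rw [Finset.sum_ite_eq' univ (1 : Equiv.Perm (Fin d))
        (fun σ => ((Equiv.Perm.sign σ : ℤ) : ℝ))]
      simp
    rw [h1] at h0
    simp at h0
  · funext vv
    rw [SimpleGraph.adjMatrix_mulVec_apply]
    rw [Pi.smul_apply, smul_eq_mul]
    have hkey : ∀ σ : Equiv.Perm (Fin d),
        (∑ w ∈ (SR d n).neighborFinset vv,
          (if (∀ i, w.1 i + (σ i : ℕ) = invWord d π i + (i : ℕ))
           then ((Equiv.Perm.sign σ : ℤ) : ℝ) else 0))
        = (if PPEAux.DC (fun k => invWord d π k + (k : ℕ)) vv.1 σ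
           then ((Equiv.Perm.sign σ : ℤ) : ℝ) else 0) := by
      intro σ
      by_cases hD : PPEAux.DC (fun k => invWord d π k + (k : ℕ)) vv.1 σ
      · rw [if_pos hD]
        obtain ⟨hle0, hcard0⟩ := hD
        have hle : ∀ k, (σ k : ℕ) ≤ invWord d π k + (k : ℕ) := hle0
        have hcard : (univ.filter fun k =>
            vv.1 k + (σ k : ℕ) ≠ invWord d π k + (k : ℕ)).card = 2 := hcard0
        have hwsum : ∑ k : Fin d, (invWord d π k + (k : ℕ) - (σ k : ℕ)) = n := by
          have h2 : ∑ k : Fin d, (σ k : ℕ) = ∑ k : Fin d, (k : ℕ) :=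
            Equiv.sum_comp σ (fun x : Fin d => (x : ℕ))
          have h4 : (∑ k : Fin d, (invWord d π k + (k : ℕ) - (σ k : ℕ))) +
              ∑ k : Fin d, (σ k : ℕ) = ∑ k : Fin d, (invWord d π k + (k : ℕ)) := by
            rw [← Finset.sum_add_distrib]
            apply Finset.sum_congr rfl
            intro k _; have := hle k; omega
          rw [hb2, h2] at h4
          omega
        set w : SRVert d n := ⟨fun k => invWord d π k + (k : ℕ) - (σ k : ℕ), hwsum⟩ with hwdef
        have hwk : ∀ k, w.1 k + (σ k : ℕ) = invWord d π k + (k : ℕ) := by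
          intro k
          show (invWord d π k + (k : ℕ) - (σ k : ℕ)) + (σ k : ℕ) = invWord d π k + (k : ℕ)
          have := hle k; omega
        have hmem : w ∈ (SR d n).neighborFinset vv := by
          rw [SimpleGraph.mem_neighborFinset]
          show (univ.filter fun i => vv.1 i ≠ w.1 i).card = 2
          rw [← hcard]
          refine congrArg Finset.card (Finset.filter_congr ?_)
          intro k _
          have h5 := hwk k
          constructor
          · intro h6 h7; apply h6; omega
          · intro h6 h7; apply h6; omega
        have hsingle : ∀ w' ∈ (SR d n).neighborFinset vv,
            (∀ i, w'.1 i + (σ i : ℕ) = invWord d π i + (i : ℕ)) ↔ w' = w := by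
          intro w' _
          constructor
          · intro h
            apply Subtype.ext; funext k
            have h6 := h k; have h7 := hwk k
            omega
          · rintro rfl; exact hwk
        rw [Finset.sum_congr rfl (fun w' hw' => if_congr (hsingle w' hw') rfl rfl)]
        rw [Finset.sum_ite_eq' _ w (fun _ => ((Equiv.Perm.sign σ : ℤ) : ℝ)), if_pos hmem]
      · rw [if_neg hD]
        apply Finset.sum_eq_zero
        intro w' hw'
        rw [if_neg]
        intro hc
        apply hD
        have hle2 : ∀ k, (σ k : ℕ) ≤ invWord d π k + (k : ℕ) := fun k => by
          have := hc k; omega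
        refine ⟨hle2, ?_⟩
        have hadj : (univ.filter fun i => vv.1 i ≠ w'.1 i).card = 2 := by
          rw [SimpleGraph.mem_neighborFinset] at hw'
          exact hw'
        rw [← hadj]
        refine congrArg Finset.card (Finset.filter_congr ?_)
        intro k _
        have h5 := hc k
        show (vv.1 k + (σ k : ℕ) ≠ invWord d π k + (k : ℕ)) ↔ (vv.1 k ≠ w'.1 k)
        constructor
        · intro h6 h7; apply h6; omega
        · intro h6 h7; apply h6; omega
    calc ∑ w ∈ (SR d n).neighborFinset vv, Fvec d n π w
        = ∑ σ : Equiv.Perm (Fin d), ∑ w ∈ (SR d n).neighborFinset vv,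
            (if (∀ i, w.1 i + (σ i : ℕ) = invWord d π i + (i : ℕ))
             then ((Equiv.Perm.sign σ : ℤ) : ℝ) else 0) := by
          simp only [Fvec]
          exact Finset.sum_comm
      _ = ∑ σ : Equiv.Perm (Fin d),
            (if PPEAux.DC (fun k => invWord d π k + (k : ℕ)) vv.1 σ
             then ((Equiv.Perm.sign σ : ℤ) : ℝ) else 0) :=
          Finset.sum_congr rfl (fun σ _ => hkey σ)
      _ = -(n : ℝ) * ∑ σ : Equiv.Perm (Fin d),
            (if (∀ k, vv.1 k + (σ k : ℕ) = invWord d π k + (k : ℕ))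
             then ((Equiv.Perm.sign σ : ℤ) : ℝ) else 0) :=
          PPEAux.core (fun k => invWord d π k + (k : ℕ)) vv.1 n hb1 hb2 vv.2
      _ = -(n : ℝ) * Fvec d n π vv := rfl
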